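/- arXiv:1904.10687 — 2 statements merged into one kernel-verified Lean document; each statement's English description precedes it below -/
import Mathlib

section
/- Let 0 ≤ β ≤ α ≤ 1. For all i, i' ∈ I such that Q_i ∩ Q_{i'} ≠ ∅, the operator norm satisfies ‖T_i^{−1} T_{i'}‖ ≤ 104, where ‖·‖ denotes the operator norm on 2×2 real matrices induced by the Euclidean norm on ℝ². -/
set_option maxHeartbeats 1000000


noncomputable section

open Real Set MeasureTheory Pointwise
open scoped ENNReal

/-- `ℝ²` with the Euclidean norm. -/
abbrev R2 : Type := EuclideanSpace ℝ (Fin 2)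

/-- The vector `(a, b) ∈ ℝ²`. -/
def vec2 (a b : ℝ) : R2 := (EuclideanSpace.equiv (Fin 2) ℝ).symm ![a, b]

/-- Action of a `2×2` matrix on `ℝ²`. -/
def mulV (M : Matrix (Fin 2) (Fin 2) ℝ) (x : R2) : R2 :=
  (EuclideanSpace.equiv (Fin 2) ℝ).symm (M.mulVec ((EuclideanSpace.equiv (Fin 2) ℝ) x))

/-- Rotation matrix through the angle `θ`. -/
def Rmat (θ : ℝ) : Matrix (Fin 2) (Fin 2) ℝ :=
  !![Real.cos θ, -Real.sin θ; Real.sin θ, Real.cos θ]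

/-- The diagonal matrix `A_j = diag(2^{αj}, 2^{βj})`. -/
def Amat (α β : ℝ) (j : ℕ) : Matrix (Fin 2) (Fin 2) ℝ :=
  !![(2:ℝ) ^ (α * (j:ℝ)), 0; 0, (2:ℝ) ^ (β * (j:ℝ))]

/-- The angle `Θ_{j,ℓ} = 2ℓ·(π/N)·2^{(β − 1)j}`, with `N = 10`. -/
def Theta (β : ℝ) (j ℓ : ℕ) : ℝ :=
  2 * (ℓ:ℝ) * (Real.pi / 10) * (2:ℝ) ^ ((β - 1) * (j:ℝ))

/-- The translation `c_{j,m} = (2^{j−1} + m·2^{αj}, 0)ᵗ`. -/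
def cvec (α : ℝ) (j m : ℕ) : R2 :=
  vec2 ((2:ℝ) ^ ((j:ℝ) - 1) + (m:ℝ) * (2:ℝ) ^ (α * (j:ℝ))) 0

/-- The base set `Q = (−ε, 1+ε) × (−1−ε, 1+ε)`. -/
def baseQ (ε : ℝ) : Set R2 :=
  {x : R2 | x 0 ∈ Set.Ioo (-ε) (1+ε) ∧ x 1 ∈ Set.Ioo (-1-ε) (1+ε)}

/-- `m_j^max = ⌈2^{(1−α)j−1}⌉`. -/
def mjmax (α : ℝ) (j : ℕ) : ℤ := ⌈(2:ℝ) ^ ((1-α) * (j:ℝ) - 1)⌉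

/-- `ℓ_j^max = ⌈N·2^{(1−β)j}⌉`, with `N = 10`. -/
def ljmax (β : ℝ) (j : ℕ) : ℤ := ⌈(10:ℝ) * (2:ℝ) ^ ((1-β) * (j:ℝ))⌉

/-- Membership of a triple `(j,m,ℓ)` in the index set
`I₀ = {(j,m,ℓ) ∈ ℕ × ℕ₀ × ℕ₀ : m ≤ m_j^max, ℓ ≤ ℓ_j^max}` (with `ℕ = {1,2,…}`). -/
def memI0 (α β : ℝ) (i : ℕ × ℕ × ℕ) : Prop :=
  1 ≤ i.1 ∧ (i.2.1 : ℤ) ≤ mjmax α i.1 ∧ (i.2.2 : ℤ) ≤ ljmax β i.1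

/-- The set `Q_{j,m,ℓ} = R_{j,ℓ}(A_j·Q + c_{j,m})`. -/
def Qset (α β ε : ℝ) (j m ℓ : ℕ) : Set R2 :=
  (fun x => mulV (Rmat (Theta β j ℓ)) (mulV (Amat α β j) x + cvec α j m)) '' baseQ ε

/-- The index set `I = {0} ∪ I₀`: `none` plays the role of the index `0`. -/
abbrev Idx : Type := Option (ℕ × ℕ × ℕ)

/-- Membership in `I = {0} ∪ I₀`. -/
def memI (α β : ℝ) : Idx → Prop
  | none => True
  | some i => memI0 α β i

/-- The family `(Q_i)_{i ∈ I}`, where `Q₀ = B₄(0)` is the open Euclidean ball of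
radius `4` about the origin. -/
def QsetI (α β ε : ℝ) : Idx → Set R2
  | none => Metric.ball (0:R2) 4
  | some (j, m, ℓ) => Qset α β ε j m ℓ

/-- The invertible matrices `T_i`: `T_{j,m,ℓ} = R_{j,ℓ}·A_j` for `(j,m,ℓ) ∈ I₀` and
`T₀ = id`. -/
def Tmat (α β : ℝ) : Idx → Matrix (Fin 2) (Fin 2) ℝ
  | none => 1
  | some (j, _, ℓ) => Rmat (Theta β j ℓ) * Amat α β j

/-! ### Auxiliary lemmas -/

lemma mulV_apply (M : Matrix (Fin 2) (Fin 2) ℝ) (x : R2) (k : Fin 2) :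
    mulV M x k = M k 0 * x 0 + M k 1 * x 1 := by
  simp [mulV, Matrix.mulVec, dotProduct, Fin.sum_univ_two, EuclideanSpace.equiv]
  fin_cases k <;> simp

lemma vec2_zero (a b : ℝ) : vec2 a b 0 = a := by simp [vec2, EuclideanSpace.equiv]
lemma vec2_one (a b : ℝ) : vec2 a b 1 = b := by simp [vec2, EuclideanSpace.equiv]
lemma add_apply' (x y : R2) (k : Fin 2) : (x + y) k = x k + y k := rfl

lemma toECLM_eq (M : Matrix (Fin 2) (Fin 2) ℝ) (x : R2) :
    Matrix.toEuclideanCLM (𝕜 := ℝ) M x = mulV M x := rfl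

/-- Operator norm bound via the Frobenius norm, concretely for `2×2` matrices. -/
lemma opNorm_le_of_sq (M : Matrix (Fin 2) (Fin 2) ℝ) (C : ℝ) (hC : 0 ≤ C)
    (hsum : M 0 0 ^ 2 + M 0 1 ^ 2 + M 1 0 ^ 2 + M 1 1 ^ 2 ≤ C ^ 2) :
    ‖Matrix.toEuclideanCLM (𝕜 := ℝ) M‖ ≤ C := by
  apply ContinuousLinearMap.opNorm_le_bound _ hC
  intro x
  rw [toECLM_eq]
  have h1 : ‖mulV M x‖ = Real.sqrt ((mulV M x 0)^2 + (mulV M x 1)^2) := by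
    rw [EuclideanSpace.norm_eq]; simp [Fin.sum_univ_two, sq_abs]
  have h2 : ‖x‖ = Real.sqrt ((x 0)^2 + (x 1)^2) := by
    rw [EuclideanSpace.norm_eq]; simp [Fin.sum_univ_two, sq_abs]
  rw [h1, h2, mulV_apply, mulV_apply]
  rw [show C * Real.sqrt ((x 0)^2 + (x 1)^2) = Real.sqrt (C^2 * ((x 0)^2 + (x 1)^2)) by
    rw [Real.sqrt_mul (by positivity), Real.sqrt_sq hC]]
  apply Real.sqrt_le_sqrt
  nlinarith [sq_nonneg (M 0 0 * x 1 - M 0 1 * x 0), sq_nonneg (M 1 0 * x 1 - M 1 1 * x 0),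
    sq_nonneg (x 0), sq_nonneg (x 1), sq_nonneg (M 0 0), sq_nonneg (M 0 1), sq_nonneg (M 1 0),
    sq_nonneg (M 1 1)]

/-- `A_j⁻¹`. -/
def Ainv (α β : ℝ) (j : ℕ) : Matrix (Fin 2) (Fin 2) ℝ :=
  !![(2:ℝ) ^ (-(α * (j:ℝ))), 0; 0, (2:ℝ) ^ (-(β * (j:ℝ)))]

lemma rpow_neg_mul_self (x : ℝ) : (2:ℝ) ^ (-x) * (2:ℝ) ^ x = 1 := by
  rw [← Real.rpow_add two_pos]; simp

lemma Tinv_eq (α β θ : ℝ) (j : ℕ) :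
    (Rmat θ * Amat α β j)⁻¹ = Ainv α β j * Rmat (-θ) := by
  apply Matrix.inv_eq_left_inv
  ext i k
  fin_cases i <;> fin_cases k <;>
    simp [Rmat, Amat, Ainv, Matrix.mul_apply, Fin.sum_univ_two, Matrix.one_apply] <;>
    nlinarith [rpow_neg_mul_self (α * (j:ℝ)), rpow_neg_mul_self (β * (j:ℝ)),
      Real.sin_sq_add_cos_sq θ]

lemma Mentries (α β θ θ' : ℝ) (j j' : ℕ) :
    (Rmat θ * Amat α β j)⁻¹ * (Rmat θ' * Amat α β j') =
    !![ (2:ℝ)^(-(α*(j:ℝ))) * Real.cos (θ'-θ) * (2:ℝ)^(α*(j':ℝ)),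
        -((2:ℝ)^(-(α*(j:ℝ))) * Real.sin (θ'-θ) * (2:ℝ)^(β*(j':ℝ)));
        (2:ℝ)^(-(β*(j:ℝ))) * Real.sin (θ'-θ) * (2:ℝ)^(α*(j':ℝ)),
        (2:ℝ)^(-(β*(j:ℝ))) * Real.cos (θ'-θ) * (2:ℝ)^(β*(j':ℝ))] := by
  rw [Tinv_eq]
  ext i k
  fin_cases i <;> fin_cases k <;>
    simp [Rmat, Amat, Ainv, Matrix.mul_apply, Fin.sum_univ_two, Real.cos_sub, Real.sin_sub] <;>
    ring

lemma Tinv_entries (α β θ : ℝ) (j : ℕ) :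
    (Rmat θ * Amat α β j)⁻¹ =
    !![ (2:ℝ)^(-(α*(j:ℝ))) * Real.cos θ, (2:ℝ)^(-(α*(j:ℝ))) * Real.sin θ;
        -((2:ℝ)^(-(β*(j:ℝ))) * Real.sin θ), (2:ℝ)^(-(β*(j:ℝ))) * Real.cos θ] := by
  rw [Tinv_eq]
  ext i k
  fin_cases i <;> fin_cases k <;>
    simp [Rmat, Ainv, Matrix.mul_apply, Fin.sum_univ_two] <;> ring

lemma T_entries (α β θ : ℝ) (j : ℕ) :
    Rmat θ * Amat α β j =
    !![ Real.cos θ * (2:ℝ)^(α*(j:ℝ)), -(Real.sin θ * (2:ℝ)^(β*(j:ℝ)));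
        Real.sin θ * (2:ℝ)^(α*(j:ℝ)), Real.cos θ * (2:ℝ)^(β*(j:ℝ))] := by
  ext i k
  fin_cases i <;> fin_cases k <;>
    simp [Rmat, Amat, Matrix.mul_apply, Fin.sum_univ_two]

/-- Rotations preserve the sum of squares. -/
lemma rot_norm (sθ cθ u0 u1 : ℝ) (hpy : sθ^2 + cθ^2 = 1) :
    (cθ*u0 - sθ*u1)^2 + (sθ*u0 + cθ*u1)^2 = u0^2 + u1^2 := by
  linear_combination (u0^2 + u1^2) * hpy

/-- Coordinates and bounds for a point of a wave packet. -/
lemma packet_point {α β ε : ℝ} (hβ0 : 0 ≤ β) (hβα : β ≤ α) (hα1 : α ≤ 1)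
    (hε0 : 0 < ε) (hε1 : ε < 1/32) {j m l : ℕ} (hm : (m:ℤ) ≤ mjmax α j)
    {p : R2} (hp : p ∈ Qset α β ε j m l) :
    ∃ u0 u1 : ℝ,
      p 0 = Real.cos (Theta β j l) * u0 - Real.sin (Theta β j l) * u1 ∧
      p 1 = Real.sin (Theta β j l) * u0 + Real.cos (Theta β j l) * u1 ∧
      (15/32) * 2^((j:ℝ)) ≤ u0 ∧ u0 ≤ (97/32) * 2^((j:ℝ)) ∧
      |u1| ≤ (33/32) * (2:ℝ)^(β*(j:ℝ)) := by
  obtain ⟨x, hx, rfl⟩ := hp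
  obtain ⟨⟨hx00, hx01⟩, hx10, hx11⟩ := hx
  set u0 : ℝ := (2:ℝ)^(α*(j:ℝ)) * x 0 + ((2:ℝ)^((j:ℝ)-1) + (m:ℝ) * (2:ℝ)^(α*(j:ℝ))) with hu0def
  set u1 : ℝ := (2:ℝ)^(β*(j:ℝ)) * x 1 with hu1def
  have hw0 : (mulV (Amat α β j) x + cvec α j m) 0 = u0 := by
    rw [add_apply', mulV_apply]
    simp [Amat, cvec, vec2_zero, hu0def]
  have hw1 : (mulV (Amat α β j) x + cvec α j m) 1 = u1 := by
    rw [add_apply', mulV_apply]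
    simp [Amat, cvec, vec2_one, hu1def]
  have hαβj : (0:ℝ) ≤ (j:ℝ) := Nat.cast_nonneg j
  have hα0 : 0 ≤ α := le_trans hβ0 hβα
  have haP : (2:ℝ)^(α*(j:ℝ)) ≤ 2^((j:ℝ)) :=
    Real.rpow_le_rpow_of_exponent_le one_le_two (by nlinarith)
  have hbP : (2:ℝ)^(β*(j:ℝ)) ≤ 2^((j:ℝ)) :=
    Real.rpow_le_rpow_of_exponent_le one_le_two (by nlinarith)
  have hapos : (0:ℝ) < 2^(α*(j:ℝ)) := Real.rpow_pos_of_pos two_pos _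
  have hbpos : (0:ℝ) < 2^(β*(j:ℝ)) := Real.rpow_pos_of_pos two_pos _
  have hPpos : (0:ℝ) < 2^((j:ℝ)) := Real.rpow_pos_of_pos two_pos _
  have hhalf : (2:ℝ)^((j:ℝ)-1) * 2 = 2^((j:ℝ)) := by
    rw [← Real.rpow_add_one (by norm_num : (2:ℝ) ≠ 0)]
    norm_num
  have hmR : (m:ℝ) < (2:ℝ)^((1-α)*(j:ℝ)-1) + 1 := by
    have h1 : ((m:ℤ):ℝ) ≤ ((mjmax α j : ℤ):ℝ) := by exact_mod_cast hm
    have h2 : ((mjmax α j : ℤ):ℝ) < (2:ℝ)^((1-α)*(j:ℝ)-1) + 1 := Int.ceil_lt_add_one _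
    push_cast at h1
    linarith
  have hmmul : (m:ℝ) * (2:ℝ)^(α*(j:ℝ)) ≤ (2:ℝ)^((j:ℝ)-1) + (2:ℝ)^(α*(j:ℝ)) := by
    have hcomb : (2:ℝ)^((1-α)*(j:ℝ)-1) * (2:ℝ)^(α*(j:ℝ)) = (2:ℝ)^((j:ℝ)-1) := by
      rw [← Real.rpow_add two_pos]; ring_nf
    nlinarith [Nat.cast_nonneg (α := ℝ) m]
  have hb1 : (15/32) * 2^((j:ℝ)) ≤ u0 := by
    rw [hu0def]
    nlinarith [Nat.cast_nonneg (α := ℝ) m]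
  have hb2 : u0 ≤ (97/32) * 2^((j:ℝ)) := by
    rw [hu0def]
    nlinarith
  have hb3 : |u1| ≤ (33/32) * (2:ℝ)^(β*(j:ℝ)) := by
    have hx1abs : |x 1| ≤ 1 + ε := by
      rw [abs_le]; exact ⟨by nlinarith, by nlinarith⟩
    rw [hu1def, abs_mul, abs_of_pos hbpos]
    nlinarith [abs_nonneg (x 1)]
  have hc0 : mulV (Rmat (Theta β j l)) (mulV (Amat α β j) x + cvec α j m) 0
      = Real.cos (Theta β j l) * u0 - Real.sin (Theta β j l) * u1 := by
    rw [mulV_apply, hw0, hw1]; simp [Rmat]; ring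
  have hc1 : mulV (Rmat (Theta β j l)) (mulV (Amat α β j) x + cvec α j m) 1
      = Real.sin (Theta β j l) * u0 + Real.cos (Theta β j l) * u1 := by
    rw [mulV_apply, hw0, hw1]; simp [Rmat]
  exact ⟨u0, u1, hc0, hc1, hb1, hb2, hb3⟩

/-- For all `i, i' ∈ I` with `Q_i ∩ Q_{i'} ≠ ∅`, the operator norm
(induced by the Euclidean norm on `ℝ²`) of `T_i⁻¹·T_{i'}` is at most `104`. -/
theorem wavePacket_transition_norm (α β ε : ℝ)
    (hβ0 : 0 ≤ β) (hβα : β ≤ α) (hα1 : α ≤ 1) (hε : ε ∈ Set.Ioo (0:ℝ) (1/32))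
    (i i' : Idx) (hi : memI α β i) (hi' : memI α β i')
    (h : (QsetI α β ε i ∩ QsetI α β ε i').Nonempty) :
    ‖Matrix.toEuclideanCLM (𝕜 := ℝ) ((Tmat α β i)⁻¹ * Tmat α β i')‖ ≤ 104 := by
  obtain ⟨hε0, hε1⟩ := hε
  have hα0 : 0 ≤ α := le_trans hβ0 hβα
  obtain ⟨p, hp, hp'⟩ := h
  match i, i' with
  | none, none =>
      simp only [Tmat]
      rw [inv_one, one_mul]
      apply opNorm_le_of_sq _ _ (by norm_num)
      simp [Matrix.one_apply]
      norm_num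
  | some (j, m, l), none =>
      simp only [Tmat]
      rw [mul_one, Tinv_entries]
      apply opNorm_le_of_sq _ _ (by norm_num)
      have h1 : (2:ℝ)^(-(α*(j:ℝ))) ≤ 1 :=
        Real.rpow_le_one_of_one_le_of_nonpos one_le_two
          (by nlinarith [Nat.cast_nonneg (α := ℝ) j])
      have h2 : (2:ℝ)^(-(β*(j:ℝ))) ≤ 1 :=
        Real.rpow_le_one_of_one_le_of_nonpos one_le_two
          (by nlinarith [Nat.cast_nonneg (α := ℝ) j])
      have h1p : (0:ℝ) < 2^(-(α*(j:ℝ))) := Real.rpow_pos_of_pos two_pos _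
      have h2p : (0:ℝ) < 2^(-(β*(j:ℝ))) := Real.rpow_pos_of_pos two_pos _
      simp only [Matrix.of_apply, Matrix.cons_val', Matrix.cons_val_zero, Matrix.cons_val_one,
        Matrix.head_cons, Matrix.empty_val', Matrix.cons_val_fin_one, Matrix.head_fin_const]
      have e : ((2:ℝ)^(-(α*(j:ℝ))) * Real.cos (Theta β j l))^2
          + ((2:ℝ)^(-(α*(j:ℝ))) * Real.sin (Theta β j l))^2
          + (-((2:ℝ)^(-(β*(j:ℝ))) * Real.sin (Theta β j l)))^2
          + ((2:ℝ)^(-(β*(j:ℝ))) * Real.cos (Theta β j l))^2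
          = ((2:ℝ)^(-(α*(j:ℝ))))^2 + ((2:ℝ)^(-(β*(j:ℝ))))^2 := by
        linear_combination (((2:ℝ)^(-(α*(j:ℝ))))^2 + ((2:ℝ)^(-(β*(j:ℝ))))^2) *
          Real.sin_sq_add_cos_sq (Theta β j l)
      nlinarith only [e, h1, h2, h1p, h2p]
  | none, some (j', m', l') =>
      obtain ⟨hj', hm', hl'⟩ := hi'
      have hmm' : ((m':ℕ):ℤ) ≤ mjmax α j' := hm'
      simp only [Tmat]
      rw [inv_one, one_mul, T_entries]
      -- p is in the ball of radius 4 and in the packet (j',m',l')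
      obtain ⟨v0, v1, hp0, hp1, hv0l, _, hv1⟩ :=
        packet_point hβ0 hβα hα1 hε0 hε1 hmm' (show p ∈ Qset α β ε j' m' l' from hp')
      have hpn : ‖p‖ < 4 := mem_ball_zero_iff.mp hp
      clear hp hp' 
      have hnormsq : ‖p‖^2 = v0^2 + v1^2 := by
        have hne : ‖p‖ = Real.sqrt ((p 0)^2 + (p 1)^2) := by
          rw [EuclideanSpace.norm_eq]; simp [Fin.sum_univ_two, sq_abs]
        rw [hne, hp0, hp1]
        rw [Real.sq_sqrt (by positivity)]
        exact rot_norm _ _ _ _ (Real.sin_sq_add_cos_sq (Theta β j' l'))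
      have hPpos : (0:ℝ) < 2^((j':ℝ)) := Real.rpow_pos_of_pos two_pos _
      have hv0nn : (0:ℝ) ≤ v0 := le_trans (by positivity) hv0l
      have hv04 : v0 < 4 := by
        nlinarith only [hnormsq, hpn, norm_nonneg p, sq_nonneg v1, hv0nn]
      have hP9 : (2:ℝ)^((j':ℝ)) < 9 := by linarith only [hv0l, hv04]
      have ha' : (2:ℝ)^(α*(j':ℝ)) ≤ 2^((j':ℝ)) :=
        Real.rpow_le_rpow_of_exponent_le one_le_two
          (by nlinarith [Nat.cast_nonneg (α := ℝ) j'])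
      have hb' : (2:ℝ)^(β*(j':ℝ)) ≤ 2^((j':ℝ)) :=
        Real.rpow_le_rpow_of_exponent_le one_le_two
          (by nlinarith [Nat.cast_nonneg (α := ℝ) j'])
      have hap : (0:ℝ) < 2^(α*(j':ℝ)) := Real.rpow_pos_of_pos two_pos _
      have hbp : (0:ℝ) < 2^(β*(j':ℝ)) := Real.rpow_pos_of_pos two_pos _
      apply opNorm_le_of_sq _ _ (by norm_num)
      simp only [Matrix.of_apply, Matrix.cons_val', Matrix.cons_val_zero, Matrix.cons_val_one,
        Matrix.head_cons, Matrix.empty_val', Matrix.cons_val_fin_one, Matrix.head_fin_const]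
      have e : (Real.cos (Theta β j' l') * (2:ℝ)^(α*(j':ℝ)))^2
          + (-(Real.sin (Theta β j' l') * (2:ℝ)^(β*(j':ℝ))))^2
          + (Real.sin (Theta β j' l') * (2:ℝ)^(α*(j':ℝ)))^2
          + (Real.cos (Theta β j' l') * (2:ℝ)^(β*(j':ℝ)))^2
          = ((2:ℝ)^(α*(j':ℝ)))^2 + ((2:ℝ)^(β*(j':ℝ)))^2 := by
        linear_combination (((2:ℝ)^(α*(j':ℝ)))^2 + ((2:ℝ)^(β*(j':ℝ)))^2) *
          Real.sin_sq_add_cos_sq (Theta β j' l')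
      have ha9 : (2:ℝ)^(α*(j':ℝ)) < 9 := lt_of_le_of_lt ha' hP9
      have hb9 : (2:ℝ)^(β*(j':ℝ)) < 9 := lt_of_le_of_lt hb' hP9
      nlinarith only [e, ha9, hb9, hap, hbp]
  | some (j, m, l), some (j', m', l') =>
      obtain ⟨hj, hm, hl⟩ := hi
      obtain ⟨hj', hm', hl'⟩ := hi'
      have hmm : ((m:ℕ):ℤ) ≤ mjmax α j := hm
      have hmm' : ((m':ℕ):ℤ) ≤ mjmax α j' := hm'
      simp only [Tmat]
      rw [Mentries]
      set θ := Theta β j l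
      set θ' := Theta β j' l'
      obtain ⟨u0, u1, hp0, hp1, hu0l, hu0u, hu1⟩ :=
        packet_point hβ0 hβα hα1 hε0 hε1 hmm (show p ∈ Qset α β ε j m l from hp)
      obtain ⟨v0, v1, hq0, hq1, hv0l, hv0u, hv1⟩ :=
        packet_point hβ0 hβα hα1 hε0 hε1 hmm' (show p ∈ Qset α β ε j' m' l' from hp')
      clear hp hp'
      -- the two coordinate equations
      have e1 : Real.cos θ * u0 - Real.sin θ * u1 = Real.cos θ' * v0 - Real.sin θ' * v1 := by
        rw [← hp0, ← hq0]
      have e2 : Real.sin θ * u0 + Real.cos θ * u1 = Real.sin θ' * v0 + Real.cos θ' * v1 := by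
        rw [← hp1, ← hq1]
      have pyθ := Real.sin_sq_add_cos_sq θ
      have pyθ' := Real.sin_sq_add_cos_sq θ'
      -- equality of Euclidean norms
      have hnormeq : u0^2 + u1^2 = v0^2 + v1^2 := by
        rw [← rot_norm (Real.sin θ) (Real.cos θ) u0 u1 pyθ,
          ← rot_norm (Real.sin θ') (Real.cos θ') v0 v1 pyθ', e1, e2]
      -- positivity facts
      have hjR : (0:ℝ) ≤ (j:ℝ) := Nat.cast_nonneg j
      have hj'R : (0:ℝ) ≤ (j':ℝ) := Nat.cast_nonneg j'
      have hPpos : (0:ℝ) < 2^((j:ℝ)) := Real.rpow_pos_of_pos two_pos _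
      have hP'pos : (0:ℝ) < 2^((j':ℝ)) := Real.rpow_pos_of_pos two_pos _
      have hapos : (0:ℝ) < 2^(α*(j:ℝ)) := Real.rpow_pos_of_pos two_pos _
      have hbpos : (0:ℝ) < 2^(β*(j:ℝ)) := Real.rpow_pos_of_pos two_pos _
      have ha'pos : (0:ℝ) < 2^(α*(j':ℝ)) := Real.rpow_pos_of_pos two_pos _
      have hb'pos : (0:ℝ) < 2^(β*(j':ℝ)) := Real.rpow_pos_of_pos two_pos _
      have haipos : (0:ℝ) < 2^(-(α*(j:ℝ))) := Real.rpow_pos_of_pos two_pos _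
      have hbipos : (0:ℝ) < 2^(-(β*(j:ℝ))) := Real.rpow_pos_of_pos two_pos _
      have haia : (2:ℝ)^(-(α*(j:ℝ))) * (2:ℝ)^(α*(j:ℝ)) = 1 := rpow_neg_mul_self _
      have hbib : (2:ℝ)^(-(β*(j:ℝ))) * (2:ℝ)^(β*(j:ℝ)) = 1 := rpow_neg_mul_self _
      -- comparability of scales: 2^{j'} < 7 · 2^j, hence j' ≤ j + 2
      have hbP : (2:ℝ)^(β*(j:ℝ)) ≤ 2^((j:ℝ)) :=
        Real.rpow_le_rpow_of_exponent_le one_le_two (by nlinarith only [hβ0, hβα, hα1, hjR])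
      have hu0nn : (0:ℝ) ≤ u0 := le_trans (by positivity) hu0l
      have hu1sq : u1^2 ≤ (33/32)^2 * ((2:ℝ)^(β*(j:ℝ)))^2 := by
        nlinarith only [hu1, abs_nonneg u1, sq_abs u1]
      have hv0sq : ((15/32) * 2^((j':ℝ)))^2 ≤ v0^2 := by
        nlinarith only [hv0l, hP'pos]
      have hu0sq : u0^2 ≤ (97/32)^2 * ((2:ℝ)^((j:ℝ)))^2 := by
        nlinarith only [hu0u, hu0nn]
      have hbsq : ((2:ℝ)^(β*(j:ℝ)))^2 ≤ ((2:ℝ)^((j:ℝ)))^2 := by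
        nlinarith only [hbP, hbpos]
      have hscale : (2:ℝ)^((j':ℝ)) < 7 * 2^((j:ℝ)) := by
        nlinarith only [hu1sq, hv0sq, hu0sq, hbsq, hnormeq, sq_nonneg v1, hPpos, hP'pos]
      have hjj' : (j':ℝ) ≤ (j:ℝ) + 2 := by
        have h23 : (2:ℝ)^((j:ℝ)+3) = 2^((j:ℝ)) * 8 := by
          rw [Real.rpow_add two_pos, show ((3:ℝ)) = ((3:ℕ):ℝ) by norm_num,
            Real.rpow_natCast]
          norm_num
        have h8 : (2:ℝ)^((j':ℝ)) < 2^((j:ℝ)+3) := by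
          rw [h23]; linarith only [hscale, hPpos]
        have hlt := (Real.rpow_lt_rpow_left_iff (x := (2:ℝ)) one_lt_two).mp h8
        have hnat : j' < j + 3 := by exact_mod_cast (by push_cast; linarith only [hlt] :
          (j':ℝ) < ((j + 3 : ℕ):ℝ))
        have hle : j' ≤ j + 2 := by omega
        calc (j':ℝ) ≤ ((j + 2 : ℕ):ℝ) := by exact_mod_cast hle
          _ = (j:ℝ) + 2 := by push_cast; ring
      -- exponent comparisons
      have hαd : α*(j':ℝ) ≤ α*(j:ℝ) + 2 := by nlinarith only [hjj', hα1, hβ0, hβα, hj'R]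
      have hβd : β*(j':ℝ) ≤ β*(j:ℝ) + 2 := by nlinarith only [hjj', hα1, hβ0, hβα, hj'R]
      have hfour : ((2:ℝ)^(2:ℝ)) = 4 := by
        rw [show (2:ℝ) = ((2:ℕ):ℝ) by norm_num, Real.rpow_natCast]; norm_num
      have ha4 : (2:ℝ)^(α*(j':ℝ)) ≤ 4 * 2^(α*(j:ℝ)) := by
        have h := Real.rpow_le_rpow_of_exponent_le (x := (2:ℝ)) one_le_two hαd
        rw [Real.rpow_add two_pos, hfour] at h
        linarith only [h]
      have hb4 : (2:ℝ)^(β*(j':ℝ)) ≤ 4 * 2^(β*(j:ℝ)) := by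
        have h := Real.rpow_le_rpow_of_exponent_le (x := (2:ℝ)) one_le_two hβd
        rw [Real.rpow_add two_pos, hfour] at h
        linarith only [h]
      have haP4 : (2:ℝ)^(α*(j':ℝ)) ≤ 4 * 2^((j:ℝ)) := by
        have hle : α*(j':ℝ) ≤ (j:ℝ) + 2 := by nlinarith only [hjj', hα1, hβ0, hβα, hj'R]
        have h2 := Real.rpow_le_rpow_of_exponent_le (x := (2:ℝ)) one_le_two hle
        calc (2:ℝ)^(α*(j':ℝ)) ≤ 2^((j:ℝ)+2) := h2
          _ = 4 * 2^((j:ℝ)) := by rw [Real.rpow_add two_pos, hfour]; ring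
      have hba : (2:ℝ)^(β*(j:ℝ)) ≤ 2^(α*(j:ℝ)) :=
        Real.rpow_le_rpow_of_exponent_le one_le_two (by nlinarith only [hβα, hjR])
      -- the angle estimate
      have hkey : Real.sin (θ' - θ) * u0 = Real.cos (θ' - θ) * u1 - v1 := by
        rw [Real.sin_sub, Real.cos_sub]
        linear_combination (Real.sin θ') * e1 - (Real.cos θ') * e2 - v1 * pyθ'
      have hsin : |Real.sin (θ' - θ)| * 2^((j:ℝ)) ≤ 12 * (2:ℝ)^(β*(j:ℝ)) := by
        have habs : |Real.sin (θ' - θ)| * u0 ≤ |u1| + |v1| := by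
          have h1 : |Real.sin (θ' - θ) * u0| = |Real.sin (θ' - θ)| * u0 := by
            rw [abs_mul, abs_of_nonneg hu0nn]
          rw [← h1, hkey]
          calc |Real.cos (θ' - θ) * u1 - v1| ≤ |Real.cos (θ' - θ) * u1| + |v1| :=
                abs_sub _ _
            _ ≤ |u1| + |v1| := by
                rw [abs_mul]
                nlinarith only [Real.abs_cos_le_one (θ' - θ), abs_nonneg u1, abs_nonneg v1]
        have hsv : |v1| ≤ (33/32) * 4 * (2:ℝ)^(β*(j:ℝ)) := by
          calc |v1| ≤ (33/32) * (2:ℝ)^(β*(j':ℝ)) := hv1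
            _ ≤ (33/32) * 4 * (2:ℝ)^(β*(j:ℝ)) := by linarith only [hb4]
        have hsabs : (0:ℝ) ≤ |Real.sin (θ' - θ)| := abs_nonneg _
        nlinarith only [habs, hsv, hu1, hu0l, hsabs, hbpos]
      -- bound each entry
      set s := Real.sin (θ' - θ)
      set c := Real.cos (θ' - θ)
      have hc1 : |c| ≤ 1 := Real.abs_cos_le_one _
      have hcabs : (0:ℝ) ≤ |c| := abs_nonneg _
      have hsabs : (0:ℝ) ≤ |s| := abs_nonneg _
      have hsP : |s| * 2^((j:ℝ)) ≤ 12 * (2:ℝ)^(β*(j:ℝ)) := hsin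
      have hE00 : |(2:ℝ)^(-(α*(j:ℝ))) * c * (2:ℝ)^(α*(j':ℝ))| ≤ 4 := by
        rw [abs_mul, abs_mul, abs_of_pos haipos, abs_of_pos ha'pos]
        have h1 : (2:ℝ)^(-(α*(j:ℝ))) * |c| ≤ (2:ℝ)^(-(α*(j:ℝ))) := by
          nlinarith only [hc1, haipos, hcabs]
        have h2 : (2:ℝ)^(-(α*(j:ℝ))) * |c| * (2:ℝ)^(α*(j':ℝ))
            ≤ (2:ℝ)^(-(α*(j:ℝ))) * (4 * 2^(α*(j:ℝ))) := by
          nlinarith only [h1, ha4, ha'pos, haipos, hcabs]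
        calc (2:ℝ)^(-(α*(j:ℝ))) * |c| * (2:ℝ)^(α*(j':ℝ))
            ≤ (2:ℝ)^(-(α*(j:ℝ))) * (4 * 2^(α*(j:ℝ))) := h2
          _ = 4 * ((2:ℝ)^(-(α*(j:ℝ))) * (2:ℝ)^(α*(j:ℝ))) := by ring
          _ = 4 := by rw [haia, mul_one]
      have hE11 : |(2:ℝ)^(-(β*(j:ℝ))) * c * (2:ℝ)^(β*(j':ℝ))| ≤ 4 := by
        rw [abs_mul, abs_mul, abs_of_pos hbipos, abs_of_pos hb'pos]
        have h1 : (2:ℝ)^(-(β*(j:ℝ))) * |c| ≤ (2:ℝ)^(-(β*(j:ℝ))) := by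
          nlinarith only [hc1, hbipos, hcabs]
        have h2 : (2:ℝ)^(-(β*(j:ℝ))) * |c| * (2:ℝ)^(β*(j':ℝ))
            ≤ (2:ℝ)^(-(β*(j:ℝ))) * (4 * 2^(β*(j:ℝ))) := by
          nlinarith only [h1, hb4, hb'pos, hbipos, hcabs]
        calc (2:ℝ)^(-(β*(j:ℝ))) * |c| * (2:ℝ)^(β*(j':ℝ))
            ≤ (2:ℝ)^(-(β*(j:ℝ))) * (4 * 2^(β*(j:ℝ))) := h2
          _ = 4 * ((2:ℝ)^(-(β*(j:ℝ))) * (2:ℝ)^(β*(j:ℝ))) := by ring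
          _ = 4 := by rw [hbib, mul_one]
      have hE10 : |(2:ℝ)^(-(β*(j:ℝ))) * s * (2:ℝ)^(α*(j':ℝ))| ≤ 48 := by
        rw [abs_mul, abs_mul, abs_of_pos hbipos, abs_of_pos ha'pos]
        have h1 : |s| * (2:ℝ)^(α*(j':ℝ)) ≤ 4 * (|s| * 2^((j:ℝ))) := by
          nlinarith only [haP4, hsabs]
        have h2 : |s| * (2:ℝ)^(α*(j':ℝ)) ≤ 48 * (2:ℝ)^(β*(j:ℝ)) := by
          linarith only [h1, hsP]
        calc (2:ℝ)^(-(β*(j:ℝ))) * |s| * (2:ℝ)^(α*(j':ℝ))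
            = (2:ℝ)^(-(β*(j:ℝ))) * (|s| * (2:ℝ)^(α*(j':ℝ))) := by ring
          _ ≤ (2:ℝ)^(-(β*(j:ℝ))) * (48 * (2:ℝ)^(β*(j:ℝ))) := by
              nlinarith only [h2, hbipos]
          _ = 48 * ((2:ℝ)^(-(β*(j:ℝ))) * (2:ℝ)^(β*(j:ℝ))) := by ring
          _ = 48 := by rw [hbib, mul_one]
      have hE01 : |-((2:ℝ)^(-(α*(j:ℝ))) * s * (2:ℝ)^(β*(j':ℝ)))| ≤ 48 := by
        rw [abs_neg, abs_mul, abs_mul, abs_of_pos haipos, abs_of_pos hb'pos]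
        have h1 : |s| * (2:ℝ)^(β*(j':ℝ)) ≤ 4 * (|s| * 2^(β*(j:ℝ))) := by
          nlinarith only [hb4, hsabs]
        have h2 : |s| * (2:ℝ)^(β*(j:ℝ)) ≤ |s| * 2^((j:ℝ)) := by
          nlinarith only [hbP, hsabs]
        have h3 : |s| * (2:ℝ)^(β*(j':ℝ)) ≤ 48 * (2:ℝ)^(β*(j:ℝ)) := by
          linarith only [h1, h2, hsP]
        have h4 : (48:ℝ) * (2:ℝ)^(β*(j:ℝ)) ≤ 48 * (2:ℝ)^(α*(j:ℝ)) := by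
          linarith only [hba]
        calc (2:ℝ)^(-(α*(j:ℝ))) * |s| * (2:ℝ)^(β*(j':ℝ))
            = (2:ℝ)^(-(α*(j:ℝ))) * (|s| * (2:ℝ)^(β*(j':ℝ))) := by ring
          _ ≤ (2:ℝ)^(-(α*(j:ℝ))) * (48 * (2:ℝ)^(α*(j:ℝ))) := by
              nlinarith only [h3, h4, haipos]
          _ = 48 * ((2:ℝ)^(-(α*(j:ℝ))) * (2:ℝ)^(α*(j:ℝ))) := by ring
          _ = 48 := by rw [haia, mul_one]
      apply opNorm_le_of_sq _ _ (by norm_num)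
      simp only [Matrix.of_apply, Matrix.cons_val', Matrix.cons_val_zero, Matrix.cons_val_one,
        Matrix.head_cons, Matrix.empty_val', Matrix.cons_val_fin_one, Matrix.head_fin_const]
      have q00 : ((2:ℝ)^(-(α*(j:ℝ))) * c * (2:ℝ)^(α*(j':ℝ)))^2 ≤ 16 := by
        nlinarith only [hE00, abs_nonneg ((2:ℝ)^(-(α*(j:ℝ))) * c * (2:ℝ)^(α*(j':ℝ))),
          sq_abs ((2:ℝ)^(-(α*(j:ℝ))) * c * (2:ℝ)^(α*(j':ℝ)))]
      have q01 : (-((2:ℝ)^(-(α*(j:ℝ))) * s * (2:ℝ)^(β*(j':ℝ))))^2 ≤ 2304 := by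
        nlinarith only [hE01, abs_nonneg (-((2:ℝ)^(-(α*(j:ℝ))) * s * (2:ℝ)^(β*(j':ℝ)))),
          sq_abs (-((2:ℝ)^(-(α*(j:ℝ))) * s * (2:ℝ)^(β*(j':ℝ))))]
      have q10 : ((2:ℝ)^(-(β*(j:ℝ))) * s * (2:ℝ)^(α*(j':ℝ)))^2 ≤ 2304 := by
        nlinarith only [hE10, abs_nonneg ((2:ℝ)^(-(β*(j:ℝ))) * s * (2:ℝ)^(α*(j':ℝ))),
          sq_abs ((2:ℝ)^(-(β*(j:ℝ))) * s * (2:ℝ)^(α*(j':ℝ)))]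
      have q11 : ((2:ℝ)^(-(β*(j:ℝ))) * c * (2:ℝ)^(β*(j':ℝ)))^2 ≤ 16 := by
        nlinarith only [hE11, abs_nonneg ((2:ℝ)^(-(β*(j:ℝ))) * c * (2:ℝ)^(β*(j':ℝ))),
          sq_abs ((2:ℝ)^(-(β*(j:ℝ))) * c * (2:ℝ)^(β*(j':ℝ)))]
      linarith only [q00, q01, q10, q11]
end
end

section
/- Let 0 ≤ β ≤ α ≤ 1 and s ∈ ℝ. Define the weight w^s on I by w_i^s = 2^{js} for i = (j,m,ℓ) ∈ I₀ and w₀^s = 1. Then w^s is Q^(α,β)-moderate with constant 2^{3|s|}: for all i, i' ∈ I with Q_i ∩ Q_{i'} ≠ ∅ one has w_i^s ≤ 2^{3|s|}·w_{i'}^s. -/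
noncomputable section

open Real Set MeasureTheory Pointwise
open scoped ENNReal

/-- The weight `w^s` on `I`: `w_i^s = 2^{js}` for `i = (j,m,ℓ) ∈ I₀` and `w₀^s = 1`. -/
def wI (s : ℝ) : Idx → ℝ
  | none => 1
  | some i => (2:ℝ) ^ ((i.1:ℝ) * s)

-- helpers
lemma mulV_apply0' (M : Matrix (Fin 2) (Fin 2) ℝ) (x : R2) :
    mulV M x 0 = M 0 0 * x 0 + M 0 1 * x 1 := by
  simp [mulV, Matrix.mulVec, dotProduct, Fin.sum_univ_two]
lemma mulV_apply1' (M : Matrix (Fin 2) (Fin 2) ℝ) (x : R2) :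
    mulV M x 1 = M 1 0 * x 0 + M 1 1 * x 1 := by
  simp [mulV, Matrix.mulVec, dotProduct, Fin.sum_univ_two]
lemma norm_sq' (x : R2) : ‖x‖ = Real.sqrt (x 0 ^ 2 + x 1 ^ 2) := by
  rw [EuclideanSpace.norm_eq]
  simp [Fin.sum_univ_two, sq_abs]
lemma norm_mulV_Rmat (θ : ℝ) (x : R2) : ‖mulV (Rmat θ) x‖ = ‖x‖ := by
  rw [norm_sq', norm_sq', mulV_apply0', mulV_apply1']
  have h := sin_sq_add_cos_sq θ
  have e00 : Rmat θ 0 0 = Real.cos θ := rfl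
  have e01 : Rmat θ 0 1 = -Real.sin θ := rfl
  have e10 : Rmat θ 1 0 = Real.sin θ := rfl
  have e11 : Rmat θ 1 1 = Real.cos θ := rfl
  rw [e00, e01, e10, e11]
  congr 1; nlinarith [h]

lemma rpow_two_eq : (2:ℝ)^(2:ℝ) = 4 := by
  rw [show (2:ℝ) = ((2:ℕ):ℝ) by norm_num, Real.rpow_natCast]; norm_num

set_option maxHeartbeats 1000000 in
lemma Qset_norm_bounds {α β ε : ℝ} (hβ0 : 0 ≤ β) (hβα : β ≤ α) (hα1 : α ≤ 1)
    (hε : ε ∈ Set.Ioo (0:ℝ) (1/32)) {j m ℓ : ℕ}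
    (hm : (m:ℤ) ≤ mjmax α j) {x : R2} (hx : x ∈ Qset α β ε j m ℓ) :
    (2:ℝ)^((j:ℝ)-2) < ‖x‖ ∧ ‖x‖ < (2:ℝ)^((j:ℝ)+2) := by
  obtain ⟨hε0, hε1⟩ := hε
  obtain ⟨q, ⟨hq0, hq1⟩, rfl⟩ := hx
  rw [norm_mulV_Rmat, norm_sq']
  set t := (2:ℝ)^(j:ℝ) with htdef
  set ta := (2:ℝ)^(α*(j:ℝ)) with htadef
  set tb := (2:ℝ)^(β*(j:ℝ)) with htbdef
  have ht : 0 < t := Real.rpow_pos_of_pos (by norm_num) _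
  have hta : 0 < ta := Real.rpow_pos_of_pos (by norm_num) _
  have htb : 0 < tb := Real.rpow_pos_of_pos (by norm_num) _
  have hjnn : (0:ℝ) ≤ (j:ℝ) := Nat.cast_nonneg j
  have hta_le : ta ≤ t := by
    apply Real.rpow_le_rpow_of_exponent_le one_le_two
    nlinarith
  have htb_le : tb ≤ t := by
    apply Real.rpow_le_rpow_of_exponent_le one_le_two
    nlinarith
  have h2 : (2:ℝ)^((j:ℝ)-1) = t/2 := by
    rw [Real.rpow_sub (by norm_num), Real.rpow_one]
  have hmt : (m:ℝ) * ta ≤ t/2 + ta := by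
    have h1 : (m:ℝ) ≤ (mjmax α j : ℝ) := by exact_mod_cast hm
    have h2' : (mjmax α j : ℝ) < (2:ℝ)^((1-α)*(j:ℝ)-1) + 1 := Int.ceil_lt_add_one _
    have h3 : (2:ℝ)^((1-α)*(j:ℝ)-1) * ta = t/2 := by
      rw [htadef, ← Real.rpow_add (by norm_num), ← h2]
      ring_nf
    nlinarith
  -- coordinates
  have ha : (mulV (Amat α β j) q + cvec α j m) 0
      = ta * q 0 + ((2:ℝ)^((j:ℝ)-1) + (m:ℝ) * ta) := by
    show (mulV (Amat α β j) q) 0 + cvec α j m 0 = _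
    rw [mulV_apply0']
    have : Amat α β j 0 0 = ta := rfl
    have h01 : Amat α β j 0 1 = 0 := rfl
    rw [this, h01]
    show ta * q 0 + 0 * q 1 + ((2:ℝ)^((j:ℝ)-1) + (m:ℝ) * ta) = _
    ring
  have hb : (mulV (Amat α β j) q + cvec α j m) 1 = tb * q 1 := by
    show (mulV (Amat α β j) q) 1 + cvec α j m 1 = _
    rw [mulV_apply1']
    have h10 : Amat α β j 1 0 = 0 := rfl
    have h11 : Amat α β j 1 1 = tb := rfl
    rw [h10, h11]
    show 0 * q 0 + tb * q 1 + 0 = _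
    ring
  rw [ha, hb, h2]
  set a := ta * q 0 + (t/2 + (m:ℝ) * ta) with hadef
  set b := tb * q 1 with hbdef
  have hq0l : -ε < q 0 := hq0.1
  have hq0r : q 0 < 1 + ε := hq0.2
  have hq1l : -1-ε < q 1 := hq1.1
  have hq1r : q 1 < 1 + ε := hq1.2
  have hp1 : ta * (-ε) < ta * q 0 := mul_lt_mul_of_pos_left hq0l hta
  have hp2 : ta * q 0 < ta * (1+ε) := mul_lt_mul_of_pos_left hq0r hta
  have hp3 : ε * ta ≤ ε * t := mul_le_mul_of_nonneg_left hta_le hε0.le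
  have hp4 : (2+ε) * ta ≤ (2+ε) * t := mul_le_mul_of_nonneg_left hta_le (by linarith)
  have hp5 : tb * q 1 < tb * (1+ε) := mul_lt_mul_of_pos_left hq1r htb
  have hp6 : tb * (-1-ε) < tb * q 1 := mul_lt_mul_of_pos_left hq1l htb
  have hp7 : (1+ε) * tb ≤ (1+ε) * t := mul_le_mul_of_nonneg_left htb_le (by linarith)
  have hm0 : (0:ℝ) ≤ (m:ℝ) * ta := by positivity
  have ha_lb : t/4 < a := by rw [hadef]; nlinarith
  have ha_ub : a < (3+ε)*t := by rw [hadef]; nlinarith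
  have hb_ub : |b| ≤ (1+ε)*t := by
    rw [abs_le, hbdef]; constructor <;> nlinarith
  constructor
  · rw [show (2:ℝ)^((j:ℝ)-2) = t/4 by
      rw [Real.rpow_sub (by norm_num), rpow_two_eq]]
    apply (Real.lt_sqrt (by positivity)).2
    nlinarith
  · rw [show (2:ℝ)^((j:ℝ)+2) = 4*t by
      rw [Real.rpow_add (by norm_num), rpow_two_eq]; ring]
    apply (Real.sqrt_lt' (by positivity)).2
    have hbb := abs_le.1 hb_ub
    have ha0 : (0:ℝ) ≤ a := le_of_lt ((show (0:ℝ) < t/4 by positivity).trans ha_lb)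
    have h1 : a^2 < ((3+ε)*t)^2 := pow_lt_pow_left₀ ha_ub ha0 (by norm_num)
    have h2 : b^2 ≤ ((1+ε)*t)^2 := sq_le_sq' hbb.1 hbb.2
    have key : (3+ε)^2 + (1+ε)^2 < 16 := by nlinarith
    nlinarith [h1, h2, mul_lt_mul_of_pos_right key (mul_pos ht ht)]

lemma exp_le_of_near (s : ℝ) (u v : ℝ) (h1 : u ≤ v + 3) (h2 : v ≤ u + 3) :
    u * s ≤ 3 * |s| + v * s := by
  have habs : |u - v| ≤ 3 := abs_le.2 ⟨by linarith, by linarith⟩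
  have h3 : (u - v) * s ≤ |u - v| * |s| := by
    rw [← abs_mul]; exact le_abs_self _
  have h4 : |u - v| * |s| ≤ 3 * |s| :=
    mul_le_mul_of_nonneg_right habs (abs_nonneg s)
  nlinarith

/-- The weight `w^s` (given by `w_i^s = 2^{js}` for `i = (j,m,ℓ) ∈ I₀`
and `w₀^s = 1`) is `Q^{(α,β)}`-moderate with constant `2^{3|s|}`: if `Q_i ∩ Q_{i'} ≠ ∅`
for `i, i' ∈ I`, then `w_i^s ≤ 2^{3|s|}·w_{i'}^s`. -/
theorem wavePacket_weight_moderate (α β ε s : ℝ)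
    (hβ0 : 0 ≤ β) (hβα : β ≤ α) (hα1 : α ≤ 1) (hε : ε ∈ Set.Ioo (0:ℝ) (1/32))
    (i i' : Idx) (hi : memI α β i) (hi' : memI α β i')
    (h : (QsetI α β ε i ∩ QsetI α β ε i').Nonempty) :
    wI s i ≤ (2:ℝ) ^ (3 * |s|) * wI s i' := by
  obtain ⟨x, hx, hx'⟩ := h
  have h4eq : (4:ℝ) = (2:ℝ)^(2:ℝ) := rpow_two_eq.symm
  match i, i' with
  | none, none =>
      show (1:ℝ) ≤ (2:ℝ)^(3*|s|) * 1
      rw [mul_one, ← Real.rpow_zero 2]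
      exact Real.rpow_le_rpow_of_exponent_le one_le_two (by positivity)
  | none, some (j', m', l') =>
      obtain ⟨hb1, hb2⟩ := Qset_norm_bounds hβ0 hβα hα1 hε hi'.2.1 hx'
      have hxball : ‖x‖ < 4 := mem_ball_zero_iff.1 hx
      have hj3 : (j':ℝ) ≤ 3 := by
        have : (2:ℝ)^((j':ℝ)-2) < (2:ℝ)^(2:ℝ) := by rw [← h4eq]; linarith
        have hlt : (j':ℝ) - 2 < 2 := (Real.rpow_lt_rpow_left_iff one_lt_two).1 this
        have : (j':ℝ) < 4 := by linarith
        have : j' < 4 := by exact_mod_cast this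
        have : j' ≤ 3 := by omega
        exact_mod_cast this
      show (1:ℝ) ≤ (2:ℝ)^(3*|s|) * (2:ℝ)^((j':ℝ)*s)
      rw [← Real.rpow_add (by norm_num), ← Real.rpow_zero 2]
      apply Real.rpow_le_rpow_of_exponent_le one_le_two
      have h1 : (j':ℝ) * s ≥ -((j':ℝ) * |s|) := by
        have := neg_abs_le ((j':ℝ) * s)
        rwa [abs_mul, abs_of_nonneg (Nat.cast_nonneg j' : (0:ℝ) ≤ (j':ℝ))] at this
      have h2 : (j':ℝ) * |s| ≤ 3 * |s| :=
        mul_le_mul_of_nonneg_right hj3 (abs_nonneg s)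
      linarith
  | some (j, m, l), none =>
      obtain ⟨hb1, hb2⟩ := Qset_norm_bounds hβ0 hβα hα1 hε hi.2.1 hx
      have hxball : ‖x‖ < 4 := mem_ball_zero_iff.1 hx'
      have hj3 : (j:ℝ) ≤ 3 := by
        have : (2:ℝ)^((j:ℝ)-2) < (2:ℝ)^(2:ℝ) := by rw [← h4eq]; linarith
        have hlt : (j:ℝ) - 2 < 2 := (Real.rpow_lt_rpow_left_iff one_lt_two).1 this
        have : (j:ℝ) < 4 := by linarith
        have : j < 4 := by exact_mod_cast this
        have : j ≤ 3 := by omega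
        exact_mod_cast this
      show (2:ℝ)^((j:ℝ)*s) ≤ (2:ℝ)^(3*|s|) * 1
      rw [mul_one]
      apply Real.rpow_le_rpow_of_exponent_le one_le_two
      have h1 : (j:ℝ) * s ≤ (j:ℝ) * |s| := by
        have := le_abs_self ((j:ℝ) * s)
        rwa [abs_mul, abs_of_nonneg (Nat.cast_nonneg j : (0:ℝ) ≤ (j:ℝ))] at this
      have h2 : (j:ℝ) * |s| ≤ 3 * |s| :=
        mul_le_mul_of_nonneg_right hj3 (abs_nonneg s)
      linarith
  | some (j, m, l), some (j', m', l') =>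
      obtain ⟨hb1, hb2⟩ := Qset_norm_bounds hβ0 hβα hα1 hε hi.2.1 hx
      obtain ⟨hb1', hb2'⟩ := Qset_norm_bounds hβ0 hβα hα1 hε hi'.2.1 hx'
      have key : ∀ u v : ℕ, (2:ℝ)^((u:ℝ)-2) < (2:ℝ)^((v:ℝ)+2) → (u:ℝ) ≤ (v:ℝ) + 3 := by
        intro u v huv
        have hlt : (u:ℝ) - 2 < (v:ℝ) + 2 := (Real.rpow_lt_rpow_left_iff one_lt_two).1 huv
        have : (u:ℝ) < (v:ℝ) + 4 := by linarith
        have : u < v + 4 := by exact_mod_cast this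
        have : u ≤ v + 3 := by omega
        exact_mod_cast this
      have hj1 : (j:ℝ) ≤ (j':ℝ) + 3 := key j j' (by linarith)
      have hj2 : (j':ℝ) ≤ (j:ℝ) + 3 := key j' j (by linarith)
      show (2:ℝ)^((j:ℝ)*s) ≤ (2:ℝ)^(3*|s|) * (2:ℝ)^((j':ℝ)*s)
      rw [← Real.rpow_add (by norm_num)]
      exact Real.rpow_le_rpow_of_exponent_le one_le_two (exp_le_of_near s _ _ hj1 hj2)
end
end
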